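/- arXiv:1906.06321 — 5 statements merged into one kernel-verified Lean document; each statement's English description precedes it below -/
import Mathlib

section
/- There exists an absolute constant c > 0 such that the following holds for every dimension d ≥ 1 and all parameters ε_t, ε_s, λ_r with 0 < ε_s ≤ ε_t/d and 0 < λ_r ≤ 1. Let M_1, …, M_k be real symmetric positive semidefinite d×d matrices, each with Frobenius norm at most 1, and suppose that for every t ∈ {1, …, k} there exists a vector x_t ∈ ℝ^d with x_t^T M_t x_t ≥ ε_t and x_t^T (λ_r·I + Σ_{j<t} M_j) x_t ≤ ε_s. Then k ≤ c · d · log(2d/λ_r). -/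
open Matrix Finset

section DMQAux

variable {d : ℕ}

private lemma dmq_trace_eq_sum_eig {A : Matrix (Fin d) (Fin d) ℝ} (hA : A.IsHermitian) :
    A.trace = ∑ i, hA.eigenvalues i := by
  conv_lhs => rw [hA.spectral_theorem, Unitary.conjStarAlgAut_apply]
  rw [Matrix.trace_mul_cycle,
    (Matrix.mem_unitaryGroup_iff').mp hA.eigenvectorUnitary.2, Matrix.one_mul]
  simp [Matrix.trace_diagonal]

private lemma dmq_prod_one_add_ge {s : Finset (Fin d)} {f : Fin d → ℝ} (hf : ∀ i, 0 ≤ f i) :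
    1 + ∑ i ∈ s, f i ≤ ∏ i ∈ s, (1 + f i) := by
  classical
  induction s using Finset.induction with
  | empty => simp
  | insert a s hx ih =>
    rw [Finset.sum_insert hx, Finset.prod_insert hx]
    have h1 : 0 ≤ ∑ i ∈ s, f i := Finset.sum_nonneg fun i _ => hf i
    nlinarith [hf a, ih]

private lemma dmq_det_one_add_ge {N : Matrix (Fin d) (Fin d) ℝ} (hN : N.PosSemidef) :
    1 + N.trace ≤ (1 + N).det := by
  have hH := hN.isHermitian
  have h1 : (1 : Matrix (Fin d) (Fin d) ℝ) + N =
      (hH.eigenvectorUnitary : Matrix (Fin d) (Fin d) ℝ)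
        * (1 + diagonal (RCLike.ofReal ∘ hH.eigenvalues))
        * star (hH.eigenvectorUnitary : Matrix (Fin d) (Fin d) ℝ) := by
    rw [Matrix.mul_add, Matrix.add_mul, Matrix.mul_one,
      (Matrix.mem_unitaryGroup_iff).mp hH.eigenvectorUnitary.2]
    congr 1
    exact hH.spectral_theorem
  rw [h1, Matrix.det_mul, Matrix.det_mul, mul_comm, ← mul_assoc, ← Matrix.det_mul,
    (Matrix.mem_unitaryGroup_iff').mp hH.eigenvectorUnitary.2, Matrix.det_one, one_mul]
  have h2 : (1 : Matrix (Fin d) (Fin d) ℝ) + diagonal (RCLike.ofReal ∘ hH.eigenvalues)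
      = diagonal (fun i => 1 + hH.eigenvalues i) := by
    rw [← Matrix.diagonal_one, Matrix.diagonal_add]
    rfl
  rw [h2, Matrix.det_diagonal, dmq_trace_eq_sum_eig hH]
  exact dmq_prod_one_add_ge (fun i => hN.eigenvalues_nonneg i)

private lemma dmq_psd_diag_nonneg {N : Matrix (Fin d) (Fin d) ℝ} (hN : N.PosSemidef) (i : Fin d) :
    0 ≤ N i i := by
  have := hN.dotProduct_mulVec_nonneg (Pi.single i 1)
  simpa [dotProduct, Pi.star_apply, star_trivial, Matrix.mulVec, Pi.single_apply] using this

private lemma dmq_rayleigh_le_trace {N : Matrix (Fin d) (Fin d) ℝ} (hN : N.PosSemidef)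
    (y : Fin d → ℝ) : y ⬝ᵥ N *ᵥ y ≤ N.trace * (y ⬝ᵥ y) := by
  obtain ⟨B, hB⟩ : ∃ B : Matrix (Fin d) (Fin d) ℝ, N = Bᴴ * B := by
    open scoped MatrixOrder in
    exact ⟨CFC.sqrt N, by rw [(Matrix.nonneg_iff_posSemidef.mp (CFC.sqrt_nonneg N)).isHermitian.eq,
      CFC.sqrt_mul_sqrt_self N (Matrix.nonneg_iff_posSemidef.mpr hN)]⟩
  subst hB
  have hBt : Bᴴ = Bᵀ := rfl
  have h1 : y ⬝ᵥ (Bᴴ * B) *ᵥ y = ∑ j, (∑ i, B j i * y i) ^ 2 := by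
    rw [← Matrix.mulVec_mulVec, Matrix.dotProduct_mulVec, hBt, Matrix.vecMul_transpose]
    simp [dotProduct, Matrix.mulVec, sq]
  have h2 : (Bᴴ * B).trace = ∑ j, ∑ i, (B j i) ^ 2 := by
    rw [Matrix.trace, Finset.sum_comm]
    simp [Matrix.diag, Matrix.mul_apply, hBt, sq]
  rw [h1, h2, Finset.sum_mul]
  refine Finset.sum_le_sum fun j _ => ?_
  have := Finset.sum_mul_sq_le_sq_mul_sq Finset.univ (fun i => B j i) y
  simpa [dotProduct, sq] using this

private lemma dmq_sym_dot {S P : Matrix (Fin d) (Fin d) ℝ} (hS : Sᵀ = S) (x z : Fin d → ℝ) :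
    (S *ᵥ x) ⬝ᵥ (P *ᵥ z) = x ⬝ᵥ (S * P) *ᵥ z := by
  rw [show S *ᵥ x = x ᵥ* S from by rw [← Matrix.vecMul_transpose, hS],
    ← Matrix.dotProduct_mulVec, Matrix.mulVec_mulVec]

private lemma dmq_det_le_trace_pow {P : Matrix (Fin d) (Fin d) ℝ} (hP : P.PosSemidef) :
    P.det ≤ P.trace ^ d := by
  have hH := hP.isHermitian
  have h1 : P.det = ∏ i, hH.eigenvalues i := by
    simpa using hH.det_eq_prod_eigenvalues
  rw [h1, dmq_trace_eq_sum_eig hH]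
  calc ∏ i, hH.eigenvalues i ≤ ∏ _i : Fin d, ∑ j, hH.eigenvalues j := by
        refine Finset.prod_le_prod (fun i _ => hP.eigenvalues_nonneg i) fun i _ => ?_
        exact Finset.single_le_sum (fun j _ => hP.eigenvalues_nonneg j) (Finset.mem_univ i)
    _ = (∑ j, hH.eigenvalues j) ^ d := by
        rw [Finset.prod_const, Finset.card_univ, Fintype.card_fin]

private lemma dmq_psd_sum {k : ℕ} (s : Finset (Fin k)) (M : Fin k → Matrix (Fin d) (Fin d) ℝ)
    (h : ∀ j ∈ s, (M j).PosSemidef) : (∑ j ∈ s, M j).PosSemidef :=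
  Finset.sum_induction M _ (fun _ _ ha hb => ha.add hb) Matrix.PosSemidef.zero h

/-- Key determinant step. -/
private lemma dmq_det_step {A M : Matrix (Fin d) (Fin d) ℝ} (hA : A.PosDef) (hM : M.PosSemidef)
    {εt εs : ℝ} (hεs : 0 < εs) (hd : (d : ℝ) * εs ≤ εt)
    (x : Fin d → ℝ) (hx1 : εt ≤ x ⬝ᵥ M *ᵥ x) (hx2 : x ⬝ᵥ A *ᵥ x ≤ εs) :
    (1 + (d : ℝ)) * A.det ≤ (A + M).det := by
  obtain ⟨S, hSpsd, hSS⟩ : ∃ S : Matrix (Fin d) (Fin d) ℝ, S.PosSemidef ∧ S * S = A := by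
    open scoped MatrixOrder in
    exact ⟨CFC.sqrt A, Matrix.nonneg_iff_posSemidef.mp (CFC.sqrt_nonneg A),
      CFC.sqrt_mul_sqrt_self A (Matrix.nonneg_iff_posSemidef.mpr hA.posSemidef)⟩
  have hdetA : 0 < A.det := hA.det_pos
  have hdet : S.det * S.det = A.det := by rw [← Matrix.det_mul, hSS]
  have hSdet : IsUnit S.det := by
    refine isUnit_iff_ne_zero.mpr fun h => ?_
    rw [h, mul_zero] at hdet; exact absurd hdet.symm (ne_of_gt hdetA)
  have hS1 : S * S⁻¹ = 1 := Matrix.mul_nonsing_inv S hSdet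
  have hS2 : S⁻¹ * S = 1 := Matrix.nonsing_inv_mul S hSdet
  have hSinvH : (S⁻¹).IsHermitian := hSpsd.isHermitian.inv
  have hNpsd : (S⁻¹ * M * S⁻¹).PosSemidef := by
    have := hM.conjTranspose_mul_mul_same (S⁻¹)
    rwa [hSinvH.eq] at this
  have hSNS : S * (S⁻¹ * M * S⁻¹) * S = M := by
    simp only [Matrix.mul_assoc, hS2, Matrix.mul_one]
    rw [← Matrix.mul_assoc, hS1, Matrix.one_mul]
  have hAM : A + M = S * (1 + S⁻¹ * M * S⁻¹) * S := by
    rw [Matrix.mul_add, Matrix.mul_one, Matrix.add_mul, hSS, hSNS]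
  have hdetAM : (A + M).det = (1 + S⁻¹ * M * S⁻¹).det * A.det := by
    rw [hAM, Matrix.det_mul, Matrix.det_mul, ← hdet]; ring
  have hSt : Sᵀ = S := hSpsd.isHermitian.eq
  have hy1 : (S *ᵥ x) ⬝ᵥ (S⁻¹ * M * S⁻¹) *ᵥ (S *ᵥ x) = x ⬝ᵥ M *ᵥ x := by
    rw [dmq_sym_dot hSt, Matrix.mulVec_mulVec, hSNS]
  have hy2 : (S *ᵥ x) ⬝ᵥ (S *ᵥ x) = x ⬝ᵥ A *ᵥ x := by
    rw [dmq_sym_dot hSt, hSS]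
  have htr0 : 0 ≤ (S⁻¹ * M * S⁻¹).trace :=
    Finset.sum_nonneg fun i _ => dmq_psd_diag_nonneg hNpsd i
  have htrd : (d : ℝ) ≤ (S⁻¹ * M * S⁻¹).trace := by
    have h1 : εt ≤ (S⁻¹ * M * S⁻¹).trace * εs := by
      calc εt ≤ (S *ᵥ x) ⬝ᵥ (S⁻¹ * M * S⁻¹) *ᵥ (S *ᵥ x) := by rw [hy1]; exact hx1
        _ ≤ (S⁻¹ * M * S⁻¹).trace * ((S *ᵥ x) ⬝ᵥ (S *ᵥ x)) :=
            dmq_rayleigh_le_trace hNpsd _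
        _ ≤ (S⁻¹ * M * S⁻¹).trace * εs := by
            refine mul_le_mul_of_nonneg_left ?_ htr0
            rw [hy2]; exact hx2
    exact le_of_mul_le_mul_right (le_trans hd h1) hεs
  have hdet1N : 1 + (d : ℝ) ≤ (1 + S⁻¹ * M * S⁻¹).det := by
    calc (1 : ℝ) + d ≤ 1 + (S⁻¹ * M * S⁻¹).trace := by linarith
      _ ≤ (1 + S⁻¹ * M * S⁻¹).det := dmq_det_one_add_ge hNpsd
  rw [hdetAM]
  exact mul_le_mul_of_nonneg_right hdet1N (le_of_lt hdetA)

/-- Final arithmetic. -/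
private lemma dmq_final_arith {d k : ℕ} (hd : 1 ≤ d) {lr : ℝ} (hlr : 0 < lr) (hlr1 : lr ≤ 1)
    (h : (1 + (d : ℝ)) ^ k * lr ^ d ≤ ((d : ℝ) * ((k : ℝ) + 1)) ^ d) :
    (k : ℝ) ≤ 100 * d * Real.log (2 * d / lr) := by
  have hD : (1 : ℝ) ≤ (d : ℝ) := by exact_mod_cast hd
  have hD0 : (0 : ℝ) < (d : ℝ) := by linarith
  have hk0 : (0 : ℝ) ≤ (k : ℝ) := Nat.cast_nonneg k
  have hk1 : (0 : ℝ) < (k : ℝ) + 1 := by positivity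
  set L := Real.log (2 * d / lr) with hL
  have hLsplit : L = Real.log 2 + Real.log d - Real.log lr := by
    rw [hL, Real.log_div (by positivity) (ne_of_gt hlr), Real.log_mul (by norm_num) (ne_of_gt hD0)]
  have hlog2 : (0.6931471803 : ℝ) < Real.log 2 := Real.log_two_gt_d9
  have hlogd : 0 ≤ Real.log d := Real.log_nonneg hD
  have hloglr : Real.log lr ≤ 0 := Real.log_nonpos (le_of_lt hlr) hlr1
  have hL2 : Real.log 2 ≤ L := by rw [hLsplit]; linarith
  have hLd : Real.log d ≤ L := by rw [hLsplit]; linarith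
  have hLlr : -Real.log lr ≤ L := by rw [hLsplit]; linarith
  have hLpos : 0 < L := lt_of_lt_of_le (by linarith) hL2
  -- take logs of h
  have hlhs : 0 < (1 + (d : ℝ)) ^ k * lr ^ d := by positivity
  have hlog := Real.log_le_log hlhs h
  rw [Real.log_mul (by positivity) (by positivity), Real.log_pow, Real.log_pow,
    Real.log_pow] at hlog
  have hlog1d : Real.log 2 ≤ Real.log (1 + (d : ℝ)) :=
    Real.log_le_log (by norm_num) (by linarith)
  have hsplit2 : Real.log ((d : ℝ) * ((k : ℝ) + 1)) =
      Real.log d + Real.log ((k : ℝ) + 1) := by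
    rw [Real.log_mul (ne_of_gt hD0) (ne_of_gt hk1)]
  have hlogk : Real.log ((k : ℝ) + 1) ≤ ((k : ℝ) + 1) / (8 * d) - 1
      + 3 * Real.log 2 + Real.log d := by
    have h8 : (0 : ℝ) < 8 * d := by linarith
    have h1 : Real.log (((k : ℝ) + 1) / (8 * d)) ≤ ((k : ℝ) + 1) / (8 * d) - 1 :=
      Real.log_le_sub_one_of_pos (by positivity)
    have h2 : Real.log (((k : ℝ) + 1) / (8 * d)) =
        Real.log ((k : ℝ) + 1) - (3 * Real.log 2 + Real.log d) := by
      rw [Real.log_div (ne_of_gt hk1) (ne_of_gt h8),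
        Real.log_mul (by norm_num) (ne_of_gt hD0),
        show (8 : ℝ) = 2 ^ 3 by norm_num, Real.log_pow]
      push_cast; ring
    linarith
  have hmain : (k : ℝ) * Real.log 2 ≤ (d : ℝ) * Real.log d + (d : ℝ) * Real.log ((k : ℝ) + 1)
      - (d : ℝ) * Real.log lr := by
    have hh := mul_le_mul_of_nonneg_left hlog1d hk0
    rw [hsplit2] at hlog
    have hexp : (d : ℝ) * (Real.log d + Real.log ((k : ℝ) + 1))
        = (d : ℝ) * Real.log d + (d : ℝ) * Real.log ((k : ℝ) + 1) := by ring
    linarith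
  have hdiv : (d : ℝ) * (((k : ℝ) + 1) / (8 * d)) = ((k : ℝ) + 1) / 8 := by
    field_simp
  have hmain2 : (k : ℝ) * Real.log 2 ≤ 2 * ((d : ℝ) * Real.log d) + ((k : ℝ) + 1) / 8 - d
      + 3 * ((d : ℝ) * Real.log 2) - (d : ℝ) * Real.log lr := by
    have hh := mul_le_mul_of_nonneg_left hlogk (le_of_lt hD0)
    have hexp2 : (d : ℝ) * (((k : ℝ) + 1) / (8 * d) - 1 + 3 * Real.log 2 + Real.log d)
        = (d : ℝ) * (((k : ℝ) + 1) / (8 * d)) - d + 3 * ((d : ℝ) * Real.log 2)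
          + (d : ℝ) * Real.log d := by ring
    linarith
  -- bound each product by d * L
  have hp1 : (d : ℝ) * Real.log d ≤ (d : ℝ) * L := mul_le_mul_of_nonneg_left hLd (le_of_lt hD0)
  have hp2 : (d : ℝ) * Real.log 2 ≤ (d : ℝ) * L := mul_le_mul_of_nonneg_left hL2 (le_of_lt hD0)
  have hp3 : -((d : ℝ) * Real.log lr) ≤ (d : ℝ) * L := by
    have := mul_le_mul_of_nonneg_left hLlr (le_of_lt hD0)
    linarith [this]
  have h6 : (k : ℝ) * Real.log 2 ≤ 6 * ((d : ℝ) * L) + ((k : ℝ) + 1) / 8 := by linarith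
  have hdL : (0.6931471803 : ℝ) ≤ (d : ℝ) * L := by
    have h1 : (1 : ℝ) * L ≤ (d : ℝ) * L := mul_le_mul_of_nonneg_right hD (le_of_lt hLpos)
    linarith
  have hdL8 : (1 : ℝ) / 8 ≤ (d : ℝ) * L := le_trans (by norm_num) hdL
  have h7 : (k : ℝ) * 0.5681471803 ≤ 7 * ((d : ℝ) * L) := by
    have hkl : (k : ℝ) * 0.6931471803 ≤ (k : ℝ) * Real.log 2 :=
      mul_le_mul_of_nonneg_left (le_of_lt hlog2) hk0
    linarith
  have hgoal : (100 : ℝ) * d * L = 100 * ((d : ℝ) * L) := by ring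
  rw [hgoal]
  linarith

end DMQAux

/-- **Potential-function lemma (Lemma mat_potential).**
There is an absolute constant `c > 0` such that for every dimension `d ≥ 1` and
parameters `0 < ε_s ≤ ε_t / d`, `0 < λ_r ≤ 1`, any sequence of symmetric PSD `d × d`
matrices `M 1, …, M k` with Frobenius norm at most `1`, such that each `M t` admits a
direction `x` with `xᵀ M_t x ≥ ε_t` and `xᵀ (λ_r I + ∑_{j < t} M j) x ≤ ε_s`,
must satisfy `k ≤ c · d · log (2 d / λ_r)`. -/
theorem dmq_potential_bound :
    ∃ c : ℝ, 0 < c ∧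
      ∀ (d : ℕ), 1 ≤ d →
      ∀ (εt εs lr : ℝ), 0 < εs → εs ≤ εt / d → 0 < lr → lr ≤ 1 →
      ∀ (k : ℕ) (M : Fin k → Matrix (Fin d) (Fin d) ℝ),
        (∀ t, (M t).PosSemidef) →
        (∀ t, Real.sqrt (∑ i, ∑ j, (M t i j) ^ 2) ≤ 1) →
        (∀ t : Fin k, ∃ x : Fin d → ℝ,
          εt ≤ x ⬝ᵥ (M t).mulVec x ∧
          x ⬝ᵥ (lr • (1 : Matrix (Fin d) (Fin d) ℝ) +
              ∑ j ∈ Finset.univ.filter (fun j => j < t), M j).mulVec x ≤ εs) →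
        (k : ℝ) ≤ c * d * Real.log (2 * d / lr) := by
  refine ⟨100, by norm_num, ?_⟩
  intro d hd εt εs lr hεs hεts hlr hlr1 k M hpsd hfro hdir
  have hD0 : (0 : ℝ) < (d : ℝ) := by exact_mod_cast hd
  have hdεs : (d : ℝ) * εs ≤ εt := by
    rw [le_div_iff₀ hD0] at hεts; linarith
  set S : ℕ → Matrix (Fin d) (Fin d) ℝ := fun n =>
    lr • (1 : Matrix (Fin d) (Fin d) ℝ) +
      ∑ j ∈ Finset.univ.filter (fun j : Fin k => (j : ℕ) < n), M j with hSdef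
  have hSpos : ∀ n, (S n).PosDef := by
    intro n
    have h1 : (lr • (1 : Matrix (Fin d) (Fin d) ℝ)).PosDef := by
      rw [Matrix.smul_one_eq_diagonal]
      exact Matrix.posDef_diagonal_iff.mpr fun _ => hlr
    exact h1.add_posSemidef (dmq_psd_sum _ _ fun j _ => hpsd j)
  have hstep : ∀ n (hn : n < k), (1 + (d : ℝ)) * (S n).det ≤ (S (n + 1)).det := by
    intro n hn
    obtain ⟨x, hx1, hx2⟩ := hdir ⟨n, hn⟩
    have hfil : Finset.univ.filter (fun j : Fin k => j < (⟨n, hn⟩ : Fin k)) =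
        Finset.univ.filter (fun j : Fin k => (j : ℕ) < n) := by
      apply Finset.filter_congr; intro j _; simp [Fin.lt_def]
    have hx2' : x ⬝ᵥ (S n) *ᵥ x ≤ εs := by
      simp only [hSdef]
      rw [← hfil]; exact hx2
    have hSn1 : S (n + 1) = S n + M ⟨n, hn⟩ := by
      simp only [hSdef]
      have hins : Finset.univ.filter (fun j : Fin k => (j : ℕ) < n + 1) =
          insert (⟨n, hn⟩ : Fin k) (Finset.univ.filter (fun j : Fin k => (j : ℕ) < n)) := by
        ext j
        simp only [Finset.mem_filter, Finset.mem_univ, true_and, Finset.mem_insert, Fin.ext_iff]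
        omega
      rw [hins, Finset.sum_insert (by simp)]
      abel
    rw [hSn1]
    exact dmq_det_step (hSpos n) (hpsd ⟨n, hn⟩) hεs hdεs x hx1 hx2'
  have hlow : ∀ n, n ≤ k → (1 + (d : ℝ)) ^ n * lr ^ d ≤ (S n).det := by
    intro n
    induction n with
    | zero =>
      intro _
      have h0 : S 0 = lr • (1 : Matrix (Fin d) (Fin d) ℝ) := by
        simp only [hSdef]; simp
      rw [h0, Matrix.det_smul, Matrix.det_one, Fintype.card_fin]
      simp
    | succ n ih =>
      intro hn1
      have hn : n < k := hn1
      calc (1 + (d : ℝ)) ^ (n + 1) * lr ^ d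
          = (1 + (d : ℝ)) * ((1 + (d : ℝ)) ^ n * lr ^ d) := by ring
        _ ≤ (1 + (d : ℝ)) * (S n).det := by
            refine mul_le_mul_of_nonneg_left (ih (le_of_lt hn)) ?_; positivity
        _ ≤ (S (n + 1)).det := hstep n hn
  have hfro' : ∀ t i, M t i i ≤ 1 := by
    intro t i
    have h1 : ∑ i, ∑ j, (M t i j) ^ 2 ≤ 1 := by
      have h0 : (0 : ℝ) ≤ ∑ i, ∑ j, (M t i j) ^ 2 := by positivity
      nlinarith [hfro t, Real.sq_sqrt h0, Real.sqrt_nonneg (∑ i, ∑ j, (M t i j) ^ 2)]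
    have h2 : (M t i i) ^ 2 ≤ 1 := by
      calc (M t i i) ^ 2 ≤ ∑ j, (M t i j) ^ 2 :=
            Finset.single_le_sum (f := fun j => (M t i j) ^ 2)
              (fun j _ => sq_nonneg _) (Finset.mem_univ i)
        _ ≤ ∑ i, ∑ j, (M t i j) ^ 2 :=
            Finset.single_le_sum (f := fun i => ∑ j, (M t i j) ^ 2)
              (fun i _ => by positivity) (Finset.mem_univ i)
        _ ≤ 1 := h1
    nlinarith [dmq_psd_diag_nonneg (hpsd t) i]
  have htrace : (S k).trace ≤ (d : ℝ) * ((k : ℝ) + 1) := by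
    have hcard : ((Finset.univ.filter (fun j : Fin k => (j : ℕ) < k)).card : ℝ) ≤ (k : ℝ) := by
      have h := Finset.card_filter_le (Finset.univ : Finset (Fin k))
        (fun j : Fin k => (j : ℕ) < k)
      rw [Finset.card_univ, Fintype.card_fin] at h
      exact_mod_cast h
    have h1 : ∑ j ∈ Finset.univ.filter (fun j : Fin k => (j : ℕ) < k), (M j).trace
        ≤ (k : ℝ) * d := by
      calc ∑ j ∈ Finset.univ.filter (fun j : Fin k => (j : ℕ) < k), (M j).trace
          ≤ ∑ _j ∈ Finset.univ.filter (fun j : Fin k => (j : ℕ) < k), (d : ℝ) := by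
            refine Finset.sum_le_sum fun j _ => ?_
            rw [Matrix.trace]
            calc ∑ i, (M j).diag i ≤ ∑ _i : Fin d, (1 : ℝ) :=
                  Finset.sum_le_sum fun i _ => hfro' j i
              _ = d := by simp
        _ = ((Finset.univ.filter (fun j : Fin k => (j : ℕ) < k)).card : ℝ) * d := by
            rw [Finset.sum_const, nsmul_eq_mul]
        _ ≤ (k : ℝ) * d := mul_le_mul_of_nonneg_right hcard (le_of_lt hD0)
    have h2 : (S k).trace = lr * d +
        ∑ j ∈ Finset.univ.filter (fun j : Fin k => (j : ℕ) < k), (M j).trace := by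
      simp only [hSdef]
      rw [Matrix.trace_add, Matrix.trace_smul, Matrix.trace_one, Matrix.trace_sum]
      simp [Fintype.card_fin, smul_eq_mul]
    rw [h2]
    nlinarith
  have hup : (S k).det ≤ ((d : ℝ) * ((k : ℝ) + 1)) ^ d := by
    calc (S k).det ≤ (S k).trace ^ d := dmq_det_le_trace_pow (hSpos k).posSemidef
      _ ≤ ((d : ℝ) * ((k : ℝ) + 1)) ^ d := by
          refine pow_le_pow_left₀ ?_ htrace d
          exact Finset.sum_nonneg fun i _ => dmq_psd_diag_nonneg (hSpos k).posSemidef i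
  exact dmq_final_arith hd hlr hlr1 (le_trans (hlow k le_rfl) hup)
end

section
/- Let d ≥ 1, let 0 < ε_s ≤ ε_t/d and λ_r > 0, and let M_1, …, M_k be real symmetric positive semidefinite d×d matrices such that for every t ∈ {1, …, k} there exists x_t ∈ ℝ^d with x_t^T M_t x_t ≥ ε_t and x_t^T (λ_r·I + Σ_{j<t} M_j) x_t ≤ ε_s. Then for every t ∈ {1, …, k}, det(λ_r·I + Σ_{j≤t} M_j) ≥ 2^{t−1} · λ_r^d. -/
open Matrix Finset
open scoped MatrixOrder

private lemma aux_one_add_sum_le_prod {ι : Type*} (s : Finset ι) (f : ι → ℝ)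
    (hf : ∀ i ∈ s, 0 ≤ f i) : 1 + ∑ i ∈ s, f i ≤ ∏ i ∈ s, (1 + f i) := by
  classical
  induction s using Finset.cons_induction with
  | empty => simp
  | cons a s ha ih =>
    have hfa : 0 ≤ f a := hf a (Finset.mem_cons_self a s)
    have hsum : 0 ≤ ∑ i ∈ s, f i :=
      Finset.sum_nonneg fun i hi => hf i (Finset.mem_cons_of_mem hi)
    have ih' := ih (fun i hi => hf i (Finset.mem_cons_of_mem hi))
    rw [Finset.sum_cons, Finset.prod_cons]
    have h1 : (1 + f a) * (1 + ∑ i ∈ s, f i) ≤ (1 + f a) * ∏ i ∈ s, (1 + f i) :=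
      mul_le_mul_of_nonneg_left ih' (by linarith)
    nlinarith [mul_nonneg hfa hsum]

/-- `det (1 + S) ≥ 1 + trace S` for real psd `S`. -/
private lemma aux_det_one_add {d : ℕ} {S : Matrix (Fin d) (Fin d) ℝ}
    (hS : S.PosSemidef) : 1 + S.trace ≤ (1 + S).det := by
  classical
  have hH := hS.1
  set V : Matrix (Fin d) (Fin d) ℝ := (hH.eigenvectorUnitary : Matrix (Fin d) (Fin d) ℝ) with hV
  have hVmem := hH.eigenvectorUnitary.2
  have hVs : star V * V = 1 := hVmem.1
  have hsV : V * star V = 1 := hVmem.2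
  set μ : Fin d → ℝ := hH.eigenvalues with hμ
  have hst : S = V * diagonal μ * star V := by
    have := hH.spectral_theorem
    simpa [RCLike.ofReal, Function.comp] using this
  have hone : (1 : Matrix (Fin d) (Fin d) ℝ) + S = V * diagonal (fun i => 1 + μ i) * star V := by
    have : (diagonal (fun i => 1 + μ i) : Matrix (Fin d) (Fin d) ℝ)
        = 1 + diagonal μ := by
      rw [← Matrix.diagonal_one, Matrix.diagonal_add]
    rw [this, Matrix.mul_add, Matrix.add_mul, hst, Matrix.mul_one, hsV]
  have htr : S.trace = ∑ i, μ i := by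
    rw [hst, Matrix.trace_mul_comm, ← Matrix.mul_assoc, hVs, Matrix.one_mul,
      Matrix.trace_diagonal]
  have hdet : ((1 : Matrix (Fin d) (Fin d) ℝ) + S).det = ∏ i, (1 + μ i) := by
    rw [hone, Matrix.det_mul, Matrix.det_mul, Matrix.det_diagonal]
    have : V.det * (star V).det = 1 := by rw [← Matrix.det_mul, hsV, Matrix.det_one]
    calc V.det * (∏ i, (1 + μ i)) * (star V).det
        = (V.det * (star V).det) * ∏ i, (1 + μ i) := by ring
      _ = ∏ i, (1 + μ i) := by rw [this, one_mul]
  rw [hdet, htr]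
  exact aux_one_add_sum_le_prod Finset.univ _ (fun i _ => hS.eigenvalues_nonneg i)

/-- Rayleigh quotient bounded by the trace, for psd matrices. -/
private lemma aux_rayleigh_le_trace {d : ℕ} {S : Matrix (Fin d) (Fin d) ℝ}
    (hS : S.PosSemidef) (y : Fin d → ℝ) :
    y ⬝ᵥ S *ᵥ y ≤ S.trace * (y ⬝ᵥ y) := by
  classical
  obtain ⟨C, rfl⟩ := CStarAlgebra.nonneg_iff_eq_star_mul_self.mp hS.nonneg
  rw [Matrix.star_eq_conjTranspose, Matrix.conjTranspose_eq_transpose_of_trivial]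
  have hL : y ⬝ᵥ (Cᵀ * C) *ᵥ y = (C *ᵥ y) ⬝ᵥ (C *ᵥ y) := by
    rw [← Matrix.mulVec_mulVec, Matrix.dotProduct_mulVec, Matrix.vecMul_transpose]
  rw [hL]
  have htr : (Cᵀ * C).trace = ∑ i, ∑ j, C i j ^ 2 := by
    rw [Matrix.trace]
    simp only [Matrix.diag, Matrix.mul_apply, Matrix.transpose_apply]
    rw [Finset.sum_comm]
    simp [sq]
  rw [htr]
  have hCS : ∀ i, (C *ᵥ y) i * (C *ᵥ y) i ≤ (∑ j, C i j ^ 2) * (y ⬝ᵥ y) := by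
    intro i
    have := Finset.sum_mul_sq_le_sq_mul_sq Finset.univ (fun j => C i j) y
    simpa [Matrix.mulVec, dotProduct, sq] using this
  calc (C *ᵥ y) ⬝ᵥ (C *ᵥ y) = ∑ i, (C *ᵥ y) i * (C *ᵥ y) i := rfl
    _ ≤ ∑ i, (∑ j, C i j ^ 2) * (y ⬝ᵥ y) := Finset.sum_le_sum fun i _ => hCS i
    _ = (∑ i, ∑ j, C i j ^ 2) * (y ⬝ᵥ y) := by rw [← Finset.sum_mul]

/-- Main structural lemma. -/
private lemma aux_det_add {d : ℕ} {A M : Matrix (Fin d) (Fin d) ℝ}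
    (hA : A.PosDef) (hM : M.PosSemidef) :
    ∃ c : ℝ, 0 ≤ c ∧ (1 + c) * A.det ≤ (A + M).det ∧
      ∀ x : Fin d → ℝ, x ⬝ᵥ M *ᵥ x ≤ c * (x ⬝ᵥ A *ᵥ x) := by
  classical
  set B := CFC.sqrt A with hBdef
  have hBpsd : B.PosSemidef := (CFC.sqrt_nonneg A).posSemidef
  have hBB : B * B = A := CFC.sqrt_mul_sqrt_self A hA.posSemidef.nonneg
  have hBsym : Bᵀ = B := by
    rw [← Matrix.conjTranspose_eq_transpose_of_trivial]; exact hBpsd.1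
  have hdetBB : B.det * B.det = A.det := by rw [← Matrix.det_mul, hBB]
  have hdetA : 0 < A.det := hA.det_pos
  have hdetB : IsUnit B.det := by
    refine isUnit_iff_ne_zero.mpr fun h => ?_
    rw [h, mul_zero] at hdetBB; exact absurd hdetBB.symm (ne_of_gt hdetA)
  have hBBinv : B * B⁻¹ = 1 := Matrix.mul_nonsing_inv B hdetB
  have hBinvB : B⁻¹ * B = 1 := Matrix.nonsing_inv_mul B hdetB
  set S := B⁻¹ * M * B⁻¹ with hSdef
  have hSpsd : S.PosSemidef := by
    have h := hM.conjTranspose_mul_mul_same B⁻¹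
    have hinv : (B⁻¹)ᴴ = B⁻¹ := by
      rw [Matrix.conjTranspose_nonsing_inv, hBpsd.1]
    rwa [hinv] at h
  have hBSB : B * S * B = M := by
    rw [hSdef]
    calc B * (B⁻¹ * M * B⁻¹) * B = (B * B⁻¹) * M * (B⁻¹ * B) := by
          simp only [Matrix.mul_assoc]
      _ = M := by rw [hBBinv, hBinvB, Matrix.one_mul, Matrix.mul_one]
  have hsum : A + M = B * (1 + S) * B := by
    rw [Matrix.mul_add, Matrix.add_mul, Matrix.mul_one, hBB, hBSB]
  refine ⟨S.trace, ?_, ?_, ?_⟩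
  · -- trace nonneg
    have : ∀ i, 0 ≤ S i i := by
      intro i
      have := hSpsd.dotProduct_mulVec_nonneg (Pi.single i 1)
      simpa [dotProduct, Matrix.mulVec, Pi.single_apply] using this
    exact Finset.sum_nonneg fun i _ => this i
  · -- determinant bound
    have h1 := aux_det_one_add hSpsd
    calc (1 + S.trace) * A.det ≤ ((1 : Matrix (Fin d) (Fin d) ℝ) + S).det * A.det :=
          mul_le_mul_of_nonneg_right h1 hdetA.le
      _ = (A + M).det := by
          rw [hsum, Matrix.det_mul, Matrix.det_mul, ← hdetBB]; ring
  · -- Rayleigh bound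
    intro x
    have hvB : x ᵥ* B = B *ᵥ x := by
      have h := Matrix.vecMul_transpose B x
      rwa [hBsym] at h
    have hdot : ∀ z : Fin d → ℝ, x ⬝ᵥ B *ᵥ z = (B *ᵥ x) ⬝ᵥ z := by
      intro z
      rw [Matrix.dotProduct_mulVec, hvB]
    have hMx : x ⬝ᵥ M *ᵥ x = (B *ᵥ x) ⬝ᵥ S *ᵥ (B *ᵥ x) := by
      rw [← hBSB, Matrix.mul_assoc, ← Matrix.mulVec_mulVec, hdot, ← Matrix.mulVec_mulVec]
    have hAx : x ⬝ᵥ A *ᵥ x = (B *ᵥ x) ⬝ᵥ (B *ᵥ x) := by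
      rw [← hBB, ← Matrix.mulVec_mulVec, hdot]
    rw [hMx, hAx]
    exact aux_rayleigh_le_trace hSpsd (B *ᵥ x)

/-- Monotonicity of determinant under psd addition. -/
private lemma aux_det_mono {d : ℕ} {A M : Matrix (Fin d) (Fin d) ℝ}
    (hA : A.PosDef) (hM : M.PosSemidef) : A.det ≤ (A + M).det := by
  obtain ⟨c, hc0, hdet, -⟩ := aux_det_add hA hM
  have : A.det ≤ (1 + c) * A.det := by nlinarith [hA.det_pos]
  linarith

/-- Doubling of determinant. -/
private lemma aux_det_double {d : ℕ} {A M : Matrix (Fin d) (Fin d) ℝ}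
    (hA : A.PosDef) (hM : M.PosSemidef) {εt εs : ℝ} (hεs : 0 < εs) (hts : εs ≤ εt)
    (x : Fin d → ℝ) (h1 : εt ≤ x ⬝ᵥ M *ᵥ x) (h2 : x ⬝ᵥ A *ᵥ x ≤ εs) :
    2 * A.det ≤ (A + M).det := by
  obtain ⟨c, hc0, hdet, hray⟩ := aux_det_add hA hM
  have hx0 : x ≠ 0 := by
    intro h
    rw [h] at h1
    simp [dotProduct] at h1
    linarith
  have hq : 0 < x ⬝ᵥ A *ᵥ x := by
    have := hA.dotProduct_mulVec_pos hx0
    simpa using this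
  have hc1 : 1 ≤ c := by
    have h3 := hray x
    nlinarith
  have : 2 * A.det ≤ (1 + c) * A.det := by nlinarith [hA.det_pos]
  linarith

/-- **Determinant lower bound in the potential-function lemma.**
If each matrix `M t` (`t` indexed from `0`, corresponding to the `t+1`-st matrix)
admits a direction `x` with `xᵀ M_t x ≥ ε_t` and
`xᵀ (λ_r I + ∑_{j < t} M j) x ≤ ε_s`, then for every `t`,
`det (λ_r I + ∑_{j ≤ t} M j) ≥ 2 ^ t · λ_r ^ d`  (i.e. `2 ^ (t' - 1) · λ_r ^ d`
for the `t'`-th matrix, `t' = t + 1 ∈ {1, …, k}`). -/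
theorem dmq_det_lower_bound
    (d : ℕ) (hd : 1 ≤ d) (εt εs lr : ℝ)
    (hεs : 0 < εs) (hle : εs ≤ εt / d) (hlr : 0 < lr)
    (k : ℕ) (M : Fin k → Matrix (Fin d) (Fin d) ℝ)
    (hpsd : ∀ t, (M t).PosSemidef)
    (hproc : ∀ t : Fin k, ∃ x : Fin d → ℝ,
        εt ≤ x ⬝ᵥ (M t).mulVec x ∧
        x ⬝ᵥ (lr • (1 : Matrix (Fin d) (Fin d) ℝ) +
            ∑ j ∈ Finset.univ.filter (fun j => j < t), M j).mulVec x ≤ εs) :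
    ∀ t : Fin k,
      (2 : ℝ) ^ (t : ℕ) * lr ^ d ≤
        (lr • (1 : Matrix (Fin d) (Fin d) ℝ) +
          ∑ j ∈ Finset.univ.filter (fun j => j ≤ t), M j).det := by
  classical
  -- basic facts
  have hd0 : (0 : ℝ) < d := by exact_mod_cast Nat.lt_of_lt_of_le Nat.zero_lt_one hd
  have hts : εs ≤ εt := by
    have h1 : εs * d ≤ εt := (le_div_iff₀ hd0).mp hle
    nlinarith [hεs.le, (by exact_mod_cast hd : (1:ℝ) ≤ d)]
  have hIdef : (lr • (1 : Matrix (Fin d) (Fin d) ℝ)).PosDef := by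
    rw [Matrix.smul_one_eq_diagonal]
    exact Matrix.posDef_diagonal_iff.mpr fun _ => hlr
  have hdetI : (lr • (1 : Matrix (Fin d) (Fin d) ℝ)).det = lr ^ d := by
    rw [Matrix.det_smul, Matrix.det_one, Fintype.card_fin, mul_one]
  have hsumpsd : ∀ s : Finset (Fin k), (∑ j ∈ s, M j).PosSemidef := by
    intro s
    induction s using Finset.cons_induction with
    | empty => simpa using Matrix.PosSemidef.zero
    | cons a s ha ih => rw [Finset.sum_cons]; exact (hpsd a).add ih
  have hApos : ∀ s : Finset (Fin k),
      (lr • (1 : Matrix (Fin d) (Fin d) ℝ) + ∑ j ∈ s, M j).PosDef :=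
    fun s => hIdef.add_posSemidef (hsumpsd s)
  -- filter identities
  have hfilter : ∀ t : Fin k,
      Finset.univ.filter (fun j => j ≤ t) = insert t (Finset.univ.filter (fun j => j < t)) := by
    intro t
    ext j
    simp [le_iff_lt_or_eq, or_comm]
  have hsum_le : ∀ t : Fin k,
      (∑ j ∈ Finset.univ.filter (fun j => j ≤ t), M j)
        = M t + ∑ j ∈ Finset.univ.filter (fun j => j < t), M j := by
    intro t
    rw [hfilter t, Finset.sum_insert (by simp)]
  -- key step : doubling
  have hstep : ∀ t : Fin k,
      2 * (lr • (1 : Matrix (Fin d) (Fin d) ℝ)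
          + ∑ j ∈ Finset.univ.filter (fun j => j < t), M j).det ≤
        (lr • (1 : Matrix (Fin d) (Fin d) ℝ)
          + ∑ j ∈ Finset.univ.filter (fun j => j ≤ t), M j).det := by
    intro t
    obtain ⟨x, hx1, hx2⟩ := hproc t
    have heq : lr • (1 : Matrix (Fin d) (Fin d) ℝ)
        + ∑ j ∈ Finset.univ.filter (fun j => j ≤ t), M j
        = (lr • (1 : Matrix (Fin d) (Fin d) ℝ)
            + ∑ j ∈ Finset.univ.filter (fun j => j < t), M j) + M t := by
      rw [hsum_le t]; abel
    rw [heq]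
    exact aux_det_double (hApos _) (hpsd t) hεs hts x hx1 hx2
  -- induction
  suffices H : ∀ n (hn : n < k),
      (2 : ℝ) ^ n * lr ^ d ≤
        (lr • (1 : Matrix (Fin d) (Fin d) ℝ) +
          ∑ j ∈ Finset.univ.filter (fun j => j ≤ (⟨n, hn⟩ : Fin k)), M j).det by
    intro t
    simpa using H t.1 t.2
  intro n
  induction n with
  | zero =>
    intro hn
    have hlt : Finset.univ.filter (fun j => j < (⟨0, hn⟩ : Fin k)) = ∅ := by
      ext j
      simp [Fin.lt_def]
    have := hstep ⟨0, hn⟩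
    rw [hlt] at this
    simp only [Finset.sum_empty, add_zero, hdetI] at this
    have hlrd : (0:ℝ) < lr ^ d := pow_pos hlr d
    calc (2:ℝ) ^ 0 * lr ^ d = lr ^ d := by ring
      _ ≤ 2 * lr ^ d := by linarith
      _ ≤ _ := this
  | succ m ih =>
    intro hn
    have hm : m < k := Nat.lt_of_succ_lt hn
    have hlt : Finset.univ.filter (fun j => j < (⟨m + 1, hn⟩ : Fin k))
        = Finset.univ.filter (fun j => j ≤ (⟨m, hm⟩ : Fin k)) := by
      ext j
      simp [Fin.lt_def, Fin.le_def, Nat.lt_succ_iff]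
    have hstep' := hstep ⟨m + 1, hn⟩
    rw [hlt] at hstep'
    have ihm := ih hm
    calc (2:ℝ) ^ (m + 1) * lr ^ d = 2 * ((2:ℝ) ^ m * lr ^ d) := by ring
      _ ≤ 2 * (lr • (1 : Matrix (Fin d) (Fin d) ℝ) +
            ∑ j ∈ Finset.univ.filter (fun j => j ≤ (⟨m, hm⟩ : Fin k)), M j).det := by
          linarith
      _ ≤ _ := hstep'
end

section
/- Let A be a real symmetric positive definite d×d matrix and M a real symmetric positive semidefinite d×d matrix with positive semidefinite square root M^{1/2}. Suppose ε_t, ε_s > 0 and there exists x ∈ ℝ^d with x^T M x ≥ ε_t and x^T A x ≤ ε_s. Then the largest eigenvalue of M^{1/2} A^{−1} M^{1/2} is at least ε_t/(d·ε_s). -/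
open Matrix

section Aux

variable {d : ℕ}

lemma symm_dot (P : Matrix (Fin d) (Fin d) ℝ) (hP : Pᵀ = P) (u v : Fin d → ℝ) :
    u ⬝ᵥ P *ᵥ v = v ⬝ᵥ P *ᵥ u := by
  rw [dotProduct_mulVec, show u ᵥ* P = P *ᵥ u from by rw [← vecMul_transpose, hP],
    dotProduct_comm]

lemma psd_nonneg (P : Matrix (Fin d) (Fin d) ℝ) (hP : P.PosSemidef) (u : Fin d → ℝ) :
    0 ≤ u ⬝ᵥ P *ᵥ u := by
  have := hP.dotProduct_mulVec_nonneg u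
  simpa using this

lemma cs (P : Matrix (Fin d) (Fin d) ℝ) (hP : P.PosSemidef) (u v : Fin d → ℝ) :
    (u ⬝ᵥ P *ᵥ v) ^ 2 ≤ (u ⬝ᵥ P *ᵥ u) * (v ⬝ᵥ P *ᵥ v) := by
  have hPt : Pᵀ = P := by
    have := hP.1
    simpa [Matrix.IsHermitian, Matrix.conjTranspose_eq_transpose_of_trivial] using this
  have hd : discrim (v ⬝ᵥ P *ᵥ v) (2 * (u ⬝ᵥ P *ᵥ v)) (u ⬝ᵥ P *ᵥ u) ≤ 0 := by
    apply discrim_le_zero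
    intro t
    have h0 := psd_nonneg P hP (u + t • v)
    have : (u + t • v) ⬝ᵥ P *ᵥ (u + t • v)
        = (v ⬝ᵥ P *ᵥ v) * (t * t) + 2 * (u ⬝ᵥ P *ᵥ v) * t + u ⬝ᵥ P *ᵥ u := by
      rw [mulVec_add, mulVec_smul, add_dotProduct, smul_dotProduct, dotProduct_add,
        dotProduct_add, dotProduct_smul, dotProduct_smul, symm_dot P hPt v u]
      simp [smul_eq_mul]; ring
    linarith [this ▸ h0]
  rw [discrim] at hd
  nlinarith [hd]

end Aux

/-- The largest eigenvalue of a symmetric matrix `B`, characterized as the supremum of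
the Rayleigh quotient `zᵀ B z` over unit vectors `z` (Euclidean norm). -/
noncomputable def maxEig {d : ℕ} (B : Matrix (Fin d) (Fin d) ℝ) : ℝ :=
  sSup {r : ℝ | ∃ z : Fin d → ℝ, (∑ i, z i ^ 2) = 1 ∧ r = z ⬝ᵥ B.mulVec z}

/-- **Eigenvalue lower bound.**
If `A` is symmetric positive definite, `M` is symmetric positive semidefinite with
positive semidefinite square root `R` (`R * R = M`), and some `x` satisfies
`xᵀ M x ≥ ε_t` and `xᵀ A x ≤ ε_s`, then the largest eigenvalue of
`M^{1/2} A⁻¹ M^{1/2}` is at least `ε_t / (d ε_s)`. -/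
theorem dmq_eigenvalue_lower_bound
    (d : ℕ) (A M R : Matrix (Fin d) (Fin d) ℝ)
    (hA : A.PosDef) (hM : M.PosSemidef) (hR : R.PosSemidef) (hRR : R * R = M)
    (εt εs : ℝ) (hεt : 0 < εt) (hεs : 0 < εs)
    (hx : ∃ x : Fin d → ℝ, εt ≤ x ⬝ᵥ M.mulVec x ∧ x ⬝ᵥ A.mulVec x ≤ εs) :
    εt / (d * εs) ≤ maxEig (R * A⁻¹ * R) := by
  obtain ⟨x, hxM, hxA⟩ := hx
  rcases Nat.eq_zero_or_pos d with hd | hd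
  · subst hd
    have : {r : ℝ | ∃ z : Fin 0 → ℝ, (∑ i, z i ^ 2) = 1 ∧ r = z ⬝ᵥ (R * A⁻¹ * R).mulVec z} = ∅ := by
      ext r; simp
    rw [maxEig, this, Real.sSup_empty]
    simp
  · -- main case: d ≥ 1
    have hRt : Rᵀ = R := by
      have := hR.1
      simpa [Matrix.IsHermitian, Matrix.conjTranspose_eq_transpose_of_trivial] using this
    have hAi : (A⁻¹).PosSemidef := hA.inv.posSemidef
    have hAit : (A⁻¹)ᵀ = A⁻¹ := by
      have := hAi.1
      simpa [Matrix.IsHermitian, Matrix.conjTranspose_eq_transpose_of_trivial] using this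
    have hdet : IsUnit A.det := hA.det_pos.ne'.isUnit
    have hinvA : ∀ v : Fin d → ℝ, A⁻¹ *ᵥ (A *ᵥ v) = v := by
      intro v
      rw [mulVec_mulVec, nonsing_inv_mul A hdet, one_mulVec]
    set w : Fin d → ℝ := R *ᵥ x with hw
    have hMx : M *ᵥ x = R *ᵥ w := by rw [hw, mulVec_mulVec, hRR]
    set n : ℝ := x ⬝ᵥ M *ᵥ x with hndef
    have hn : 0 < n := lt_of_lt_of_le hεt hxM
    have hww : w ⬝ᵥ w = n := by
      rw [hndef, hMx, symm_dot R hRt x w]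
    set a : ℝ := x ⬝ᵥ A *ᵥ x with hadef
    have hxne : x ≠ 0 := by
      intro h
      rw [hndef, h] at hn
      simp at hn
    have ha : 0 < a := by
      have := hA.dotProduct_mulVec_pos hxne
      simp only [star_trivial] at this
      exact this
    set q : ℝ := (M *ᵥ x) ⬝ᵥ A⁻¹ *ᵥ (M *ᵥ x) with hqdef
    -- Cauchy–Schwarz in the A⁻¹ inner product
    have hcs := cs A⁻¹ hAi (A *ᵥ x) (M *ᵥ x)
    have key1 : (A *ᵥ x) ⬝ᵥ A⁻¹ *ᵥ (M *ᵥ x) = n := by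
      rw [symm_dot A⁻¹ hAit, hinvA x, dotProduct_comm]
    have key2 : (A *ᵥ x) ⬝ᵥ A⁻¹ *ᵥ (A *ᵥ x) = a := by
      rw [symm_dot A⁻¹ hAit, hinvA x, dotProduct_comm]
    rw [key1, key2] at hcs
    -- hcs : n ^ 2 ≤ a * q
    set z : Fin d → ℝ := (Real.sqrt n)⁻¹ • w with hz
    have hsqrt : Real.sqrt n ≠ 0 := (Real.sqrt_pos.mpr hn).ne'
    have hsum : (∑ i, z i ^ 2) = 1 := by
      have : (∑ i, z i ^ 2) = (Real.sqrt n)⁻¹ ^ 2 * (w ⬝ᵥ w) := by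
        simp [hz, dotProduct, Finset.mul_sum, mul_pow]
        congr 1; ext i; ring
      rw [this, hww]
      rw [show (Real.sqrt n)⁻¹ ^ 2 = ((Real.sqrt n) ^ 2)⁻¹ by rw [inv_pow],
        Real.sq_sqrt hn.le]
      exact inv_mul_cancel₀ hn.ne'
    have hval : z ⬝ᵥ (R * A⁻¹ * R) *ᵥ z = n⁻¹ * q := by
      have hBw : ∀ v : Fin d → ℝ, (R * A⁻¹ * R) *ᵥ v = R *ᵥ (A⁻¹ *ᵥ (R *ᵥ v)) := by
        intro v
        rw [mulVec_mulVec, mulVec_mulVec]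
      have hwBw : w ⬝ᵥ (R * A⁻¹ * R) *ᵥ w = q := by
        rw [hBw w, symm_dot R hRt w, dotProduct_comm, ← hMx]
      rw [hz, smul_dotProduct, mulVec_smul, dotProduct_smul, hwBw, smul_eq_mul, smul_eq_mul,
        ← mul_assoc, ← Real.sqrt_inv, Real.mul_self_sqrt (by positivity)]
    have hq : εt / (↑d * εs) ≤ n⁻¹ * q := by
      have h1 : n / a ≤ n⁻¹ * q := by
        rw [div_le_iff₀ ha, inv_mul_eq_div, div_mul_eq_mul_div, le_div_iff₀ hn]
        nlinarith [hcs]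
      have h2 : εt / εs ≤ n / a := by
        rw [div_le_div_iff₀ hεs ha]
        nlinarith
      have hd1 : (1:ℝ) ≤ (d:ℝ) := by exact_mod_cast hd
      have hds : 0 < (d:ℝ) * εs := mul_pos (by linarith) hεs
      have h3 : εt / (↑d * εs) ≤ εt / εs := by
        rw [div_le_div_iff₀ hds hεs]
        nlinarith [mul_nonneg (mul_nonneg hεt.le hεs.le) (sub_nonneg.mpr hd1)]
      linarith
    have hbdd : BddAbove {r : ℝ | ∃ z : Fin d → ℝ, (∑ i, z i ^ 2) = 1 ∧
        r = z ⬝ᵥ (R * A⁻¹ * R).mulVec z} := by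
      refine ⟨∑ i, ∑ j, |(R * A⁻¹ * R) i j|, ?_⟩
      rintro r ⟨y, hy1, rfl⟩
      have hyle : ∀ i, |y i| ≤ 1 := by
        intro i
        have h1 : y i ^ 2 ≤ 1 := hy1 ▸ Finset.single_le_sum
          (fun j _ => sq_nonneg (y j)) (Finset.mem_univ i)
        nlinarith [sq_abs (y i), abs_nonneg (y i)]
      calc y ⬝ᵥ (R * A⁻¹ * R).mulVec y ≤ |y ⬝ᵥ (R * A⁻¹ * R).mulVec y| := le_abs_self _
        _ = |∑ i, y i * ∑ j, (R * A⁻¹ * R) i j * y j| := by simp [dotProduct, mulVec]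
        _ ≤ ∑ i, |y i * ∑ j, (R * A⁻¹ * R) i j * y j| := Finset.abs_sum_le_sum_abs _ _
        _ ≤ ∑ i, ∑ j, |(R * A⁻¹ * R) i j| := by
            apply Finset.sum_le_sum
            intro i _
            rw [abs_mul]
            have h2 : |∑ j, (R * A⁻¹ * R) i j * y j| ≤ ∑ j, |(R * A⁻¹ * R) i j| := by
              refine (Finset.abs_sum_le_sum_abs _ _).trans
                (Finset.sum_le_sum fun j _ => ?_)
              rw [abs_mul]
              exact mul_le_of_le_one_right (abs_nonneg _) (hyle j)
            calc |y i| * |∑ j, (R * A⁻¹ * R) i j * y j|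
                ≤ 1 * ∑ j, |(R * A⁻¹ * R) i j| :=
                  mul_le_mul (hyle i) h2 (abs_nonneg _) one_pos.le
              _ = _ := one_mul _
    refine le_trans hq ?_
    rw [maxEig]
    exact le_csSup hbdd ⟨z, hsum, hval.symm⟩
end

section
/- Let Q be a real symmetric positive semidefinite d×d matrix, let λ > 0, and let θ ∈ ℝ^d. Setting E = (Q + λ·I)^{−1} Q − I, it holds that (Eθ)^T Q (Eθ) ≤ λ ‖θ‖_2^2. -/
open Matrix

lemma dot_sq_nonneg {d : ℕ} (v : Fin d → ℝ) : 0 ≤ v ⬝ᵥ v :=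
  Finset.sum_nonneg fun i _ => mul_self_nonneg (v i)

/-- **Bound on the ridge shrinkage (regularization-bias) term `I₁`.**
For symmetric PSD `Q`, `λ > 0`, and `E = (Q + λ I)⁻¹ Q - I`, we have
`(E θ)ᵀ Q (E θ) ≤ λ ‖θ‖₂²`. -/
theorem ridge_shrinkage_bias_bound
    (d : ℕ) (Q : Matrix (Fin d) (Fin d) ℝ) (hQ : Q.PosSemidef)
    (lam : ℝ) (hlam : 0 < lam) (θ : Fin d → ℝ)
    (E : Matrix (Fin d) (Fin d) ℝ) (hE : E = (Q + lam • 1)⁻¹ * Q - 1) :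
    (E.mulVec θ) ⬝ᵥ Q.mulVec (E.mulVec θ) ≤ lam * ∑ i, θ i ^ 2 := by
  set A : Matrix (Fin d) (Fin d) ℝ := Q + lam • 1 with hA
  have hApd : A.PosDef := by
    refine Matrix.PosDef.posSemidef_add hQ (Matrix.PosDef.of_dotProduct_mulVec_pos (by simp [Matrix.IsHermitian, Matrix.conjTranspose_smul]) ?_)
    intro x hx
    have hpos : (0:ℝ) < star x ⬝ᵥ x := Matrix.dotProduct_star_self_pos_iff.mpr hx
    have hmv : (lam • (1:Matrix (Fin d) (Fin d) ℝ)).mulVec x = lam • x := by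
      simp [Matrix.smul_mulVec]
    rw [hmv, dotProduct_smul, smul_eq_mul]
    exact mul_pos hlam hpos
  have hAunit : IsUnit A.det := hApd.isUnit.map (Matrix.detMonoidHom)
  have hAinv : A⁻¹ * A = 1 := Matrix.nonsing_inv_mul A hAunit
  -- E = -lam • A⁻¹
  have hE2 : E = (-lam) • A⁻¹ := by
    have h1 : A⁻¹ * Q - 1 = A⁻¹ * Q - A⁻¹ * A := by rw [hAinv]
    rw [hE, h1, ← Matrix.mul_sub]
    have hQA : Q - A = (-lam) • (1 : Matrix (Fin d) (Fin d) ℝ) := by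
      rw [hA]; simp
    rw [hQA, Matrix.mul_smul, Matrix.mul_one]
  set v : Fin d → ℝ := A⁻¹.mulVec θ with hv
  have hAv : A.mulVec v = θ := by
    rw [hv, Matrix.mulVec_mulVec, Matrix.mul_nonsing_inv A hAunit, Matrix.one_mulVec]
  have hEθ : E.mulVec θ = (-lam) • v := by
    rw [hE2, Matrix.smul_mulVec, hv]
  -- symmetry of Q
  have hQsymm : ∀ a b : Fin d → ℝ, Q.mulVec a ⬝ᵥ b = a ⬝ᵥ Q.mulVec b := by
    intro a b
    have hQt : Qᵀ = Q := (by simpa using hQ.1 : Q.IsSymm)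
    calc Q.mulVec a ⬝ᵥ b = (a ᵥ* Qᵀ) ⬝ᵥ b := by
          rw [← Matrix.mulVec_transpose, Matrix.transpose_transpose]
      _ = a ⬝ᵥ Qᵀ.mulVec b := (Matrix.dotProduct_mulVec a Qᵀ b).symm
      _ = a ⬝ᵥ Q.mulVec b := by rw [hQt]
  have hθθ : θ ⬝ᵥ θ = Q.mulVec v ⬝ᵥ Q.mulVec v + 2 * lam * (v ⬝ᵥ Q.mulVec v)
      + lam ^ 2 * (v ⬝ᵥ v) := by
    rw [← hAv]
    have hAmv : A.mulVec v = Q.mulVec v + lam • v := by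
      simp [hA, Matrix.add_mulVec, Matrix.smul_mulVec]
    rw [hAmv]
    rw [add_dotProduct, dotProduct_add, dotProduct_add, smul_dotProduct,
      dotProduct_smul, smul_dotProduct, smul_eq_mul, smul_eq_mul, smul_eq_mul,
      hQsymm v v]
    simp [dotProduct_smul, smul_eq_mul]
    ring
  have hsum : ∑ i, θ i ^ 2 = θ ⬝ᵥ θ := by
    simp [dotProduct, pow_two]
  have hLHS : (E.mulVec θ) ⬝ᵥ Q.mulVec (E.mulVec θ) = lam ^ 2 * (v ⬝ᵥ Q.mulVec v) := by
    rw [hEθ, smul_dotProduct, Matrix.mulVec_smul, dotProduct_smul]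
    simp [smul_eq_mul]
    ring
  have h1 : 0 ≤ v ⬝ᵥ Q.mulVec v := by simpa using hQ.dotProduct_mulVec_nonneg v
  have h2 : 0 ≤ Q.mulVec v ⬝ᵥ Q.mulVec v := dot_sq_nonneg _
  have h3 : 0 ≤ v ⬝ᵥ v := dot_sq_nonneg _
  rw [hLHS, hsum, hθθ]
  nlinarith [mul_nonneg hlam.le h2, mul_nonneg (mul_nonneg hlam.le hlam.le) h1,
    mul_nonneg (mul_nonneg (mul_nonneg hlam.le hlam.le) hlam.le) h3]
end

section
/- Let d ≥ 1, let 0 < ε_s ≤ ε_t/d and 0 < λ_r ≤ 1, and let M_1, …, M_k be real symmetric positive semidefinite d×d matrices, each with Frobenius norm at most 1, such that for every t ∈ {1, …, k} there exists x_t ∈ ℝ^d with x_t^T M_t x_t ≥ ε_t and x_t^T (λ_r·I + Σ_{j<t} M_j) x_t ≤ ε_s. Then 2^{k−1} · λ_r^d ≤ (k+1)^d. -/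
open Matrix Finset

lemma dot_self_nonneg' {d : ℕ} (x : Fin d → ℝ) : 0 ≤ x ⬝ᵥ x := by
  have : x ⬝ᵥ x = ∑ i, (x i)^2 := by simp [dotProduct, pow_two]
  rw [this]; positivity

lemma quad_le_frobenius {d : ℕ} (M : Matrix (Fin d) (Fin d) ℝ) (x : Fin d → ℝ) :
    x ⬝ᵥ M *ᵥ x ≤ Real.sqrt (∑ i, ∑ j, (M i j)^2) * (x ⬝ᵥ x) := by
  classical
  have hlhs : x ⬝ᵥ M *ᵥ x = ∑ p ∈ (Finset.univ ×ˢ Finset.univ : Finset (Fin d × Fin d)),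
      M p.1 p.2 * (x p.1 * x p.2) := by
    rw [Finset.sum_product]
    simp [dotProduct, Matrix.mulVec, Finset.mul_sum]
    exact Finset.sum_congr rfl fun i _ => Finset.sum_congr rfl fun j _ => by ring
  have hcs := Finset.sum_mul_sq_le_sq_mul_sq (Finset.univ ×ˢ Finset.univ)
    (fun p : Fin d × Fin d => M p.1 p.2) (fun p => x p.1 * x p.2)
  have hg : ∑ p ∈ (Finset.univ ×ˢ Finset.univ : Finset (Fin d × Fin d)), (x p.1 * x p.2)^2
      = (x ⬝ᵥ x)^2 := by
    rw [Finset.sum_product]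
    simp [dotProduct, pow_two, Finset.sum_mul, Finset.mul_sum]
    exact Finset.sum_congr rfl fun i _ => Finset.sum_congr rfl fun j _ => by ring
  have hf : ∑ p ∈ (Finset.univ ×ˢ Finset.univ : Finset (Fin d × Fin d)), (M p.1 p.2)^2
      = ∑ i, ∑ j, (M i j)^2 := by rw [Finset.sum_product]
  rw [hg, hf] at hcs
  calc x ⬝ᵥ M *ᵥ x ≤ |x ⬝ᵥ M *ᵥ x| := le_abs_self _
    _ = Real.sqrt ((x ⬝ᵥ M *ᵥ x)^2) := (Real.sqrt_sq_eq_abs _).symm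
    _ ≤ Real.sqrt ((∑ i, ∑ j, (M i j)^2) * (x ⬝ᵥ x)^2) := by
        apply Real.sqrt_le_sqrt; rw [hlhs]; exact hcs
    _ = Real.sqrt (∑ i, ∑ j, (M i j)^2) * (x ⬝ᵥ x) := by
        rw [Real.sqrt_mul (by positivity), Real.sqrt_sq (dot_self_nonneg' x)]

lemma eig_eq_quad {d : ℕ} {N : Matrix (Fin d) (Fin d) ℝ} (hN : N.IsHermitian) (i : Fin d) :
    ∃ v : Fin d → ℝ, v ⬝ᵥ v = 1 ∧ hN.eigenvalues i = v ⬝ᵥ N *ᵥ v := by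
  refine ⟨hN.eigenvectorBasis i, ?_, ?_⟩
  · have h1 : ‖hN.eigenvectorBasis i‖ = 1 := hN.eigenvectorBasis.orthonormal.1 i
    have h2 : (inner (𝕜 := ℝ) (hN.eigenvectorBasis i) (hN.eigenvectorBasis i)) = 1 := by
      rw [real_inner_self_eq_norm_sq, h1]; norm_num
    rw [← h2, EuclideanSpace.inner_eq_star_dotProduct]
    simp [dotProduct]
  · have := hN.eigenvalues_eq i
    simp only [RCLike.re_to_real] at this
    rw [this]
    congr 1

lemma quad_repr {d : ℕ} {B : Matrix (Fin d) (Fin d) ℝ} (hB : B.IsHermitian) (z : Fin d → ℝ) :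
    ∃ w : Fin d → ℝ, z ⬝ᵥ B *ᵥ z = ∑ i, hB.eigenvalues i * (w i)^2 ∧ z ⬝ᵥ z = ∑ i, (w i)^2 := by
  set U : Matrix (Fin d) (Fin d) ℝ := (Matrix.IsHermitian.eigenvectorUnitary hB : Matrix (Fin d) (Fin d) ℝ) with hU
  have hUU : U * star U = 1 := Matrix.mem_unitaryGroup_iff.mp (Matrix.IsHermitian.eigenvectorUnitary hB).2
  set w : Fin d → ℝ := star U *ᵥ z with hw
  have hvm : z ᵥ* U = w := by
    have := Matrix.star_mulVec (star U) z
    simpa [hw, Matrix.star_eq_conjTranspose, Matrix.conjTranspose_eq_transpose_of_trivial] using this.symm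
  refine ⟨w, ?_, ?_⟩
  · conv_lhs => rw [hB.spectral_theorem, Unitary.conjStarAlgAut_apply]
    rw [← hU, ← Matrix.mulVec_mulVec, ← Matrix.mulVec_mulVec, Matrix.dotProduct_mulVec, hvm]
    simp [Matrix.mulVec_diagonal, dotProduct, Function.comp]
    exact Finset.sum_congr rfl fun i _ => by ring
  · have : z ⬝ᵥ z = z ⬝ᵥ (U * star U) *ᵥ z := by rw [hUU]; simp
    rw [this, ← Matrix.mulVec_mulVec, Matrix.dotProduct_mulVec, hvm]
    simp [dotProduct, pow_two, ← hw]

lemma det_one_add {d : ℕ} {B : Matrix (Fin d) (Fin d) ℝ} (hB : B.IsHermitian) :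
    (1 + B).det = ∏ i, (1 + hB.eigenvalues i) := by
  set U : Matrix (Fin d) (Fin d) ℝ := (Matrix.IsHermitian.eigenvectorUnitary hB : Matrix (Fin d) (Fin d) ℝ) with hU
  have hUU' : star U * U = 1 := Matrix.mem_unitaryGroup_iff'.mp (Matrix.IsHermitian.eigenvectorUnitary hB).2
  have key : star U * (1 + B) * U = 1 + diagonal hB.eigenvalues := by
    conv_lhs => rw [hB.spectral_theorem, Unitary.conjStarAlgAut_apply]
    rw [mul_add, add_mul, mul_one, hUU']
    congr 1
    rw [← hU]
    calc star U * (U * diagonal (RCLike.ofReal ∘ hB.eigenvalues) * star U) * U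
        = (star U * U) * diagonal (RCLike.ofReal ∘ hB.eigenvalues) * (star U * U) := by
          noncomm_ring
      _ = diagonal hB.eigenvalues := by rw [hUU']; simp [Function.comp]
  have hdet : det (star U) * det U = 1 := by
    rw [← det_mul, hUU']; simp
  have h1 := congrArg Matrix.det key
  rw [det_mul, det_mul] at h1
  have h2 : det (1 + B) = det (1 + diagonal hB.eigenvalues) := by
    calc det (1 + B) = (det (star U) * det U) * det (1+B) := by rw [hdet]; ring
      _ = (det (star U) * det (1+B) * det U) := by ring
      _ = det (1 + diagonal hB.eigenvalues) := h1
  rw [h2]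
  have h3 : (1 : Matrix (Fin d) (Fin d) ℝ) + diagonal hB.eigenvalues = diagonal (fun i => 1 + hB.eigenvalues i) := by
    rw [← diagonal_one, diagonal_add]
  rw [h3, det_diagonal]

open scoped MatrixOrder in
lemma det_step {d : ℕ} {A M : Matrix (Fin d) (Fin d) ℝ} (hA : A.PosDef) (hM : M.PosSemidef)
    (x : Fin d → ℝ) (hx1 : 0 < x ⬝ᵥ M *ᵥ x) (hx2 : x ⬝ᵥ A *ᵥ x ≤ x ⬝ᵥ M *ᵥ x) :
    2 * A.det ≤ (A + M).det := by
  classical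
  have hAs : A.PosSemidef := hA.posSemidef
  set S := CFC.sqrt A with hSdef
  have hS : S.PosSemidef := (CFC.sqrt_nonneg A).posSemidef
  have hSS : S * S = A := CFC.sqrt_mul_sqrt_self A hAs.nonneg
  have hdetA : 0 < A.det := hA.det_pos
  have hdetSS : S.det * S.det = A.det := by rw [← det_mul, hSS]
  have hSdet : IsUnit S.det := by
    refine (isUnit_iff_ne_zero).2 fun h => ?_
    rw [h, mul_zero] at hdetSS
    exact hdetA.ne' hdetSS.symm
  have hSinv : S * S⁻¹ = 1 := Matrix.mul_nonsing_inv _ hSdet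
  have hSinv' : S⁻¹ * S = 1 := Matrix.nonsing_inv_mul _ hSdet
  have hSinvH : (S⁻¹).IsHermitian := hS.1.inv
  set B := S⁻¹ * M * S⁻¹ with hBdef
  have hBpsd : B.PosSemidef := by
    have := hM.mul_mul_conjTranspose_same S⁻¹
    rwa [hSinvH.eq] at this
  have hMid : S * B * S = M := by
    calc S * (S⁻¹ * M * S⁻¹) * S = (S * S⁻¹) * M * (S⁻¹ * S) := by noncomm_ring
      _ = M := by rw [hSinv, hSinv']; simp
  have hAM : A + M = S * (1 + B) * S := by
    rw [mul_add, add_mul, mul_one, hSS, hMid]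
  set z := S *ᵥ x with hz
  have hSsymm : S⁻¹ᵀ = S⁻¹ := by
    have := hSinvH.eq; rwa [Matrix.conjTranspose] at this
  have hStrans : Sᵀ = S := by
    have := hS.1.eq; rwa [Matrix.conjTranspose] at this
  have hzBz : z ⬝ᵥ B *ᵥ z = x ⬝ᵥ M *ᵥ x := by
    have h1 : B *ᵥ z = S⁻¹ *ᵥ (M *ᵥ x) := by
      rw [hz, Matrix.mulVec_mulVec, hBdef]
      rw [show S⁻¹ * M * S⁻¹ * S = S⁻¹ * M by rw [mul_assoc, hSinv', mul_one], ← Matrix.mulVec_mulVec]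
    rw [h1, Matrix.dotProduct_mulVec]
    have h2 : z ᵥ* S⁻¹ = x := by
      rw [← hSsymm, Matrix.vecMul_transpose, hz, Matrix.mulVec_mulVec, hSinv', Matrix.one_mulVec]
    rw [h2]
  have hzz : z ⬝ᵥ z = x ⬝ᵥ A *ᵥ x := by
    rw [hz, Matrix.dotProduct_mulVec]
    have h2 : (S *ᵥ x) ᵥ* S = A *ᵥ x := by
      rw [← hStrans, Matrix.vecMul_transpose, hStrans, Matrix.mulVec_mulVec, hSS]
    rw [h2, dotProduct_comm]
  obtain ⟨w, hw1, hw2⟩ := quad_repr hBpsd.1 z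
  have hxA : 0 < x ⬝ᵥ A *ᵥ x := by simpa using hA.dotProduct_mulVec_pos (x := x) (fun h => by simp [h] at hx1)
  have hexists : ∃ i, 1 ≤ hBpsd.1.eigenvalues i := by
    by_contra hcon
    push_neg at hcon
    have hwne : ∃ i, w i ≠ 0 := by
      by_contra hw0
      push_neg at hw0
      have : z ⬝ᵥ z = 0 := by rw [hw2]; simp [hw0]
      rw [hzz] at this; exact hxA.ne' this
    obtain ⟨i0, hi0⟩ := hwne
    have hlt : ∑ i, hBpsd.1.eigenvalues i * (w i)^2 < ∑ i, (w i)^2 := by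
      refine Finset.sum_lt_sum (fun i _ => ?_) ⟨i0, Finset.mem_univ _, ?_⟩
      · exact mul_le_of_le_one_left (sq_nonneg _) (hcon i).le
      · have : (0:ℝ) < (w i0)^2 := by positivity
        calc hBpsd.1.eigenvalues i0 * (w i0)^2 < 1 * (w i0)^2 :=
              mul_lt_mul_of_pos_right (hcon i0) this
          _ = (w i0)^2 := one_mul _
    rw [← hw1, ← hw2, hzBz, hzz] at hlt
    exact absurd hlt (not_lt.2 hx2)
  obtain ⟨i0, hi0⟩ := hexists
  have hprod : 2 ≤ (1 + B).det := by
    rw [det_one_add hBpsd.1]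
    have h20 : (2:ℝ) = ∏ i, (if i = i0 then (2:ℝ) else 1) := by
      rw [Finset.prod_ite_eq' Finset.univ i0 (fun _ => (2:ℝ))]
      simp
    rw [h20]
    refine Finset.prod_le_prod (fun i _ => by positivity) (fun i _ => ?_)
    have := hBpsd.eigenvalues_nonneg i
    by_cases h : i = i0
    · subst h; simp; linarith
    · simp [h]; linarith
  have hfin : (A + M).det = A.det * (1 + B).det := by
    rw [hAM, det_mul, det_mul, ← hdetSS]; ring
  rw [hfin]
  calc 2 * A.det = A.det * 2 := by ring
    _ ≤ A.det * (1 + B).det := mul_le_mul_of_nonneg_left hprod hdetA.le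

lemma dot_sum_mulVec {d k : ℕ} (s : Finset (Fin k)) (M : Fin k → Matrix (Fin d) (Fin d) ℝ)
    (v : Fin d → ℝ) :
    v ⬝ᵥ (∑ j ∈ s, M j) *ᵥ v = ∑ j ∈ s, v ⬝ᵥ (M j) *ᵥ v := by
  induction s using Finset.induction_on with
  | empty => simp [Matrix.mulVec, dotProduct]
  | insert _ _ h ih => rename_i a s'; rw [Finset.sum_insert h, Finset.sum_insert h, Matrix.add_mulVec,
      dotProduct_add, ih]

/-- **Determinant sandwich.**
If `d ≥ 1`, `0 < ε_s ≤ ε_t / d`, `0 < λ_r ≤ 1`, and `M 1, …, M k` are symmetric PSD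
matrices with Frobenius norm at most `1` such that each `M t` admits a direction `x`
with `xᵀ M_t x ≥ ε_t` and `xᵀ (λ_r I + ∑_{j < t} M j) x ≤ ε_s`, then
`2 ^ (k - 1) · λ_r ^ d ≤ (k + 1) ^ d`. -/
theorem dmq_det_sandwich
    (d : ℕ) (hd : 1 ≤ d) (εt εs lr : ℝ)
    (hεs : 0 < εs) (hle : εs ≤ εt / d) (hlr0 : 0 < lr) (hlr1 : lr ≤ 1)
    (k : ℕ) (M : Fin k → Matrix (Fin d) (Fin d) ℝ)
    (hpsd : ∀ t, (M t).PosSemidef)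
    (hF : ∀ t, Real.sqrt (∑ i, ∑ j, (M t i j) ^ 2) ≤ 1)
    (hproc : ∀ t : Fin k, ∃ x : Fin d → ℝ,
        εt ≤ x ⬝ᵥ (M t).mulVec x ∧
        x ⬝ᵥ (lr • (1 : Matrix (Fin d) (Fin d) ℝ) +
            ∑ j ∈ Finset.univ.filter (fun j => j < t), M j).mulVec x ≤ εs) :
    (2 : ℝ) ^ ((k : ℤ) - 1) * lr ^ d ≤ (k + 1 : ℝ) ^ d := by
  classical
  have hdR : (1:ℝ) ≤ (d:ℝ) := by exact_mod_cast hd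
  have hdpos : (0:ℝ) < (d:ℝ) := by linarith
  have hεtd : 0 < εt / d := lt_of_lt_of_le hεs hle
  have hεt : 0 < εt := by
    have := mul_pos hεtd hdpos
    rwa [div_mul_cancel₀ _ hdpos.ne'] at this
  have hεs_le_εt : εs ≤ εt := hle.trans (div_le_self hεt.le hdR)
  set A : ℕ → Matrix (Fin d) (Fin d) ℝ :=
    fun t => lr • (1 : Matrix (Fin d) (Fin d) ℝ) +
      ∑ j ∈ Finset.univ.filter (fun j : Fin k => (j:ℕ) < t), M j with hAdef
  have hIpos : (lr • (1 : Matrix (Fin d) (Fin d) ℝ)).PosDef := by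
    refine Matrix.PosDef.of_dotProduct_mulVec_pos ?_ ?_
    · show (lr • (1 : Matrix (Fin d) (Fin d) ℝ))ᴴ = _
      rw [conjTranspose_smul]; simp
    · intro x hx
      have h1 : (lr • (1 : Matrix (Fin d) (Fin d) ℝ)) *ᵥ x = lr • x := by
        rw [Matrix.smul_mulVec, Matrix.one_mulVec]
      show 0 < star x ⬝ᵥ (lr • (1 : Matrix (Fin d) (Fin d) ℝ)) *ᵥ x
      rw [h1]
      have hsx : star x = x := by funext i; simp
      rw [hsx, dotProduct_smul]
      have hxx : 0 < x ⬝ᵥ x := by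
        rcases lt_or_eq_of_le (dot_self_nonneg' x) with h | h
        · exact h
        · exfalso; apply hx; funext i
          have : x ⬝ᵥ x = ∑ i, (x i)^2 := by simp [dotProduct, pow_two]
          rw [this] at h
          have := (Finset.sum_eq_zero_iff_of_nonneg (fun i _ => sq_nonneg (x i))).mp h.symm
          have := this i (Finset.mem_univ i)
          exact pow_eq_zero_iff (n := 2) (by norm_num) |>.mp this
      exact mul_pos hlr0 hxx
  have hsumpsd : ∀ s : Finset (Fin k), (∑ j ∈ s, M j).PosSemidef := fun s =>
    Finset.sum_induction M _ (fun a b ha hb => ha.add hb) Matrix.PosSemidef.zero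
      (fun j _ => hpsd j)
  have hApos : ∀ t, (A t).PosDef := fun t => hIpos.add_posSemidef (hsumpsd _)
  have key : ∀ t, t ≤ k → (2:ℝ)^t * lr^d ≤ (A t).det := by
    intro t
    induction t with
    | zero =>
      intro _
      have h0 : A 0 = lr • (1 : Matrix (Fin d) (Fin d) ℝ) := by
        simp [hAdef]
      rw [h0, Matrix.det_smul]
      simp
    | succ t ih =>
      intro ht
      have htk : t < k := ht
      have h1 := ih (Nat.le_of_lt htk)
      set ft : Fin k := ⟨t, htk⟩ with hft
      have hsplit : Finset.univ.filter (fun j : Fin k => (j:ℕ) < t+1)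
          = insert ft (Finset.univ.filter (fun j : Fin k => (j:ℕ) < t)) := by
        ext j
        simp [hft, Fin.ext_iff]
        omega
      have hnot : ft ∉ Finset.univ.filter (fun j : Fin k => (j:ℕ) < t) := by simp [hft]
      have hA1 : A (t+1) = A t + M ft := by
        simp only [hAdef]
        rw [hsplit, Finset.sum_insert hnot]
        abel
      obtain ⟨x, hx1, hx2⟩ := hproc ft
      have hfilter : Finset.univ.filter (fun j : Fin k => j < ft)
          = Finset.univ.filter (fun j : Fin k => (j:ℕ) < t) := by
        ext j; simp [Fin.lt_def, hft]
      rw [hfilter] at hx2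
      have hx2' : x ⬝ᵥ (A t) *ᵥ x ≤ x ⬝ᵥ (M ft) *ᵥ x := by
        calc x ⬝ᵥ (A t) *ᵥ x ≤ εs := hx2
          _ ≤ εt := hεs_le_εt
          _ ≤ x ⬝ᵥ (M ft) *ᵥ x := hx1
      have hx1' : 0 < x ⬝ᵥ (M ft) *ᵥ x := lt_of_lt_of_le hεt hx1
      have hstep := det_step (hApos t) (hpsd ft) x hx1' hx2'
      rw [← hA1] at hstep
      calc (2:ℝ)^(t+1) * lr^d = 2 * ((2:ℝ)^t * lr^d) := by ring
        _ ≤ 2 * (A t).det := by linarith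
        _ ≤ (A (t+1)).det := hstep
  -- upper bound on det (A k)
  have hherm : (A k).IsHermitian := (hApos k).1
  have hup : (A k).det ≤ ((k:ℝ) + 1)^d := by
    have hdet : (A k).det = ∏ i, hherm.eigenvalues i := by
      have := hherm.det_eq_prod_eigenvalues
      simpa using this
    rw [hdet]
    have hbound : ∀ i, hherm.eigenvalues i ≤ (k:ℝ) + 1 := by
      intro i
      obtain ⟨v, hv1, hv2⟩ := eig_eq_quad hherm i
      rw [hv2]
      have hfull : Finset.univ.filter (fun j : Fin k => (j:ℕ) < k) = Finset.univ := by
        apply Finset.filter_true_of_mem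
        intro j _; exact j.isLt
      have hexp : v ⬝ᵥ (A k) *ᵥ v = lr * (v ⬝ᵥ v) + ∑ j : Fin k, v ⬝ᵥ (M j) *ᵥ v := by
        simp only [hAdef, hfull]
        rw [Matrix.add_mulVec, dotProduct_add, dot_sum_mulVec]
        congr 1
        rw [Matrix.smul_mulVec, Matrix.one_mulVec, dotProduct_smul]
        simp
      rw [hexp, hv1]
      have hterm : ∀ j : Fin k, v ⬝ᵥ (M j) *ᵥ v ≤ 1 := by
        intro j
        calc v ⬝ᵥ (M j) *ᵥ v ≤ Real.sqrt (∑ i, ∑ l, (M j i l)^2) * (v ⬝ᵥ v) :=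
              quad_le_frobenius _ _
          _ = Real.sqrt (∑ i, ∑ l, (M j i l)^2) := by rw [hv1, mul_one]
          _ ≤ 1 := hF j
      calc lr * 1 + ∑ j : Fin k, v ⬝ᵥ (M j) *ᵥ v
          ≤ 1 * 1 + ∑ j : Fin k, (1:ℝ) := by
            refine add_le_add (by linarith) (Finset.sum_le_sum fun j _ => hterm j)
        _ = (k:ℝ) + 1 := by simp [Finset.card_univ]; ring
    calc ∏ i, hherm.eigenvalues i ≤ ∏ _i : Fin d, ((k:ℝ) + 1) := by
          refine Finset.prod_le_prod (fun i _ => ?_) (fun i _ => hbound i)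
          exact (hApos k).posSemidef.eigenvalues_nonneg i
      _ = ((k:ℝ) + 1)^d := by simp
  calc (2:ℝ)^((k:ℤ)-1) * lr^d ≤ (2:ℝ)^(k:ℤ) * lr^d := by
        have := zpow_le_zpow_right₀ (one_le_two (α := ℝ)) (show (k:ℤ)-1 ≤ (k:ℤ) by omega)
        have hlrd : (0:ℝ) ≤ lr^d := by positivity
        exact mul_le_mul_of_nonneg_right this hlrd
    _ = (2:ℝ)^k * lr^d := by rw [zpow_natCast]
    _ ≤ (A k).det := key k le_rfl
    _ ≤ ((k:ℝ) + 1)^d := hup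
end
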